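/- arXiv:2308.10676 — 3 statements merged into one kernel-verified Lean document; each statement's English description precedes it below -/
import Mathlib

section
/- Let σ and σ' be two states of a Kelvin–Planck theory (Σ,P). The following are equivalent: (i) σ and σ' are of the same hotness, i.e., both (0, δ_σ − δ_{σ'}) and (0, δ_{σ'} − δ_σ) belong to \hat{P}; (ii) T(σ) = T(σ') for every Clausius–Duhem temperature scale T ∈ T_CD. -/
open Set

noncomputable section

/-- Signed regular Borel measures on `X`, modeled via the Riesz representation
theorem as the weak-star dual of `C(X, ℝ)`. -/
abbrev Meas (X : Type*) [TopologicalSpace X] := WeakDual ℝ C(X, ℝ)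

/-- The ambient space containing `V(X) = M°(X) ⊕ M(X)`; membership in the
subspace `M°(X)` of the first component is expressed by `p.1 1 = 0`. -/
abbrev VSp (X : Type*) [TopologicalSpace X] := Meas X × Meas X

/-- The cone of nonnegative measures. -/
def PosMeas (X : Type*) [TopologicalSpace X] : Set (Meas X) :=
  {μ | ∀ f : C(X, ℝ), (∀ x, 0 ≤ f x) → 0 ≤ μ f}

variable {X : Type*} [TopologicalSpace X]

/-- The Dirac measure at a point, i.e. the evaluation functional. -/
def dirac (x : X) : Meas X :=
  (⟨⟨⟨fun f => f x, fun _ _ => rfl⟩, fun _ _ => rfl⟩,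
    continuous_eval_const x⟩ : C(X, ℝ) →L[ℝ] ℝ)

/-- The set of nonnegative multiples of members of `P`. -/
def coneOf (P : Set (VSp X)) : Set (VSp X) :=
  {x | ∃ c : ℝ, 0 ≤ c ∧ ∃ p ∈ P, x = c • p}

/-- `\hat P`, the weak-star closure of the cone generated by `P`. -/
def hatP (P : Set (VSp X)) : Set (VSp X) :=
  closure (coneOf P)

/-- A thermodynamical theory: processes have change of condition with total mass
zero (i.e. `P ⊆ V(X)`), and `\hat P` is convex. -/
def IsThermoTheory (P : Set (VSp X)) : Prop :=
  (∀ p ∈ P, p.1 (1 : C(X, ℝ)) = 0) ∧ Convex ℝ (hatP P)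

/-- A Kelvin–Planck theory: a thermodynamical theory with
`\hat P ∩ ({0} × M₊(X)) = {(0,0)}`. -/
def IsKelvinPlanck (P : Set (VSp X)) : Prop :=
  IsThermoTheory P ∧ hatP P ∩ (({0} : Set (Meas X)) ×ˢ PosMeas X) = {(0, 0)}

/-- A Clausius–Duhem pair `(η, T)` for the theory `P`: `η` and `T` are continuous,
`T` is strictly positive, and for every continuous `β` equal pointwise to `1/T`
(such a `β` exists, and is unique, by positivity of `T`), the Clausius–Duhem
inequality `∫ η d(Δm) ≥ ∫ (1/T) dq` holds for every process in `P`. -/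
def IsCDPair (P : Set (VSp X)) (η T : C(X, ℝ)) : Prop :=
  (∀ x, 0 < T x) ∧
    ∀ β : C(X, ℝ), (∀ x, β x = (T x)⁻¹) → ∀ p ∈ P, p.2 β ≤ p.1 η

/-- A Clausius–Duhem temperature scale. -/
def IsCDTemp (P : Set (VSp X)) (T : C(X, ℝ)) : Prop :=
  ∃ η : C(X, ℝ), IsCDPair P η T

/-- Two states are of the same hotness: both `(0, δ_a − δ_b)` and `(0, δ_b − δ_a)`
belong to `\hat P`. -/
def SameHotness (P : Set (VSp X)) (a b : X) : Prop :=
  ((0 : Meas X), dirac a - dirac b) ∈ hatP P ∧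
    ((0 : Meas X), dirac b - dirac a) ∈ hatP P

/-- The hotness level of a state. -/
def hotnessLevel (P : Set (VSp X)) (a : X) : Set X :=
  {b | SameHotness P a b}

/-- A subset of the state space that is a hotness level. -/
def IsHotnessLevel (P : Set (VSp X)) (h : Set X) : Prop :=
  ∃ a : X, h = hotnessLevel P a

/-- The (signed) measure `μ` is supported in the set `A`: `μ` annihilates every
continuous function vanishing on `A`. -/
def SuppIn (μ : Meas X) (A : Set X) : Prop :=
  ∀ f : C(X, ℝ), (∀ x ∈ A, f x = 0) → μ f = 0

/-- `\hat Q` contains a passive heat transfer from hotness level `h` to `h'`: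
an element `(0, μ − μ')` of `\hat Q` with `μ, μ'` nonnegative, `supp μ ⊆ h`,
`supp μ' ⊆ h'` and `μ(h) = μ'(h') > 0` (the common value being the total mass). -/
def IsPassiveHT (Q : Set (VSp X)) (h h' : Set X) : Prop :=
  ∃ μ μ' : Meas X, μ ∈ PosMeas X ∧ μ' ∈ PosMeas X ∧ SuppIn μ h ∧ SuppIn μ' h' ∧
    μ (1 : C(X, ℝ)) = μ' (1 : C(X, ℝ)) ∧ 0 < μ (1 : C(X, ℝ)) ∧
    ((0 : Meas X), μ - μ') ∈ hatP Q

/-- Hotness level `h'` is hotter than `h`: the levels are distinct and every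
thermodynamical theory whose closed process cone contains `P` together with a
passive heat transfer from `h` to `h'` fails to be a Kelvin–Planck theory. -/
def Hotter (P : Set (VSp X)) (h' h : Set X) : Prop :=
  h' ≠ h ∧ ∀ Pd : Set (VSp X), IsThermoTheory Pd → P ⊆ hatP Pd →
    IsPassiveHT Pd h h' → ¬ IsKelvinPlanck Pd

/-- State `a` is hotter than state `b`. -/
def HotterState (P : Set (VSp X)) (a b : X) : Prop :=
  Hotter P (hotnessLevel P a) (hotnessLevel P b)

/-- A Carnot element of the theory `P` operating between hotness levels `h'` and
`h`: a reversible cyclic element `(0, μ' − μ)` with `μ', μ` nonzero nonnegative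
measures supported in `h'`, `h` respectively. -/
def IsCarnotBetween (P : Set (VSp X)) (h' h : Set X) (p : VSp X) : Prop :=
  p ∈ hatP P ∧ -p ∈ hatP P ∧
    ∃ μ' μ : Meas X, μ' ∈ PosMeas X ∧ μ ∈ PosMeas X ∧ μ' ≠ 0 ∧ μ ≠ 0 ∧
      SuppIn μ' h' ∧ SuppIn μ h ∧ p = ((0 : Meas X), μ' - μ)


noncomputable section AuxProofs

open Set Filter

variable {X : Type*} [TopologicalSpace X]

lemma meas_add_apply (μ ν : Meas X) (f : C(X, ℝ)) : (μ + ν) f = μ f + ν f := rfl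

lemma meas_smul_apply (c : ℝ) (μ : Meas X) (f : C(X, ℝ)) : (c • μ) f = c * μ f := rfl

lemma meas_sub_apply (μ ν : Meas X) (f : C(X, ℝ)) : (μ - ν) f = μ f - ν f := rfl

lemma meas_zero_apply (f : C(X, ℝ)) : (0 : Meas X) f = 0 := rfl

lemma dirac_apply (x : X) (f : C(X, ℝ)) : dirac x f = f x := rfl

/-- Evaluation at `f` as a linear functional on `Meas X`. -/
def evalLM (f : C(X, ℝ)) : Meas X →ₗ[ℝ] ℝ where
  toFun μ := μ f
  map_add' _ _ := rfl
  map_smul' _ _ := rfl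

/-- Every continuous linear functional on the weak-star dual is evaluation at some
continuous function. -/
lemma weakDual_rep (L : Meas X →L[ℝ] ℝ) : ∃ g : C(X, ℝ), ∀ μ : Meas X, L μ = μ g := by
  classical
  have hb := LinearMap.hasBasis_weakBilin (topDualPairing ℝ C(X, ℝ))
  have hU : L ⁻¹' Metric.ball (0 : ℝ) 1 ∈ nhds (0 : Meas X) :=
    L.continuous.continuousAt.preimage_mem_nhds (by
      simpa using Metric.ball_mem_nhds (0 : ℝ) one_pos)
  obtain ⟨U, hUb, hUsub⟩ := hb.mem_iff.1 hU
  have hUb2 : U ∈ (topDualPairing ℝ C(X, ℝ)).toSeminormFamily.basisSets := hUb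
  rw [SeminormFamily.basisSets_iff] at hUb2
  obtain ⟨s, r, hr, rfl⟩ := hUb2
  have key : ∀ μ : Meas X, (∀ f ∈ s, μ f = 0) → L μ = 0 := by
    intro μ hμ
    by_contra hne
    have hball : ∀ t : ℝ, (t • μ) ∈ id (Seminorm.ball
        (s.sup ((topDualPairing ℝ C(X, ℝ)).toSeminormFamily)) 0 r) := by
      intro t
      refine (Seminorm.mem_ball_zero (p := s.sup ((topDualPairing ℝ C(X, ℝ)).toSeminormFamily))).2 ?_
      refine Seminorm.finset_sup_apply_lt hr ?_
      intro f hf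
      change ‖(t • μ) f‖ < r
      show ‖t • μ f‖ < r
      rw [hμ f hf, smul_zero, norm_zero]
      exact hr
    have habs : ∀ t : ℝ, |t * L μ| < 1 := by
      intro t
      have this : L (t • μ) ∈ Metric.ball (0 : ℝ) 1 := hUsub (hball t)
      simp only [mem_preimage, Metric.mem_ball, dist_zero_right] at this
      have hLs : L (t • μ) = t * L μ := by rw [map_smul]; rfl
      rw [hLs] at this
      exact this
    have := habs ((|L μ| + 1) / L μ * (1 / L μ) * L μ)
    have h2 := habs (2 / L μ)
    rw [div_mul_cancel₀ _ hne, abs_two] at h2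
    linarith
  have hker : ⨅ i : s, LinearMap.ker (evalLM (i : C(X, ℝ)) : Meas X →ₗ[ℝ] ℝ) ≤
      LinearMap.ker (L : Meas X →ₗ[ℝ] ℝ) := by
    intro μ hμ
    simp only [Submodule.mem_iInf, LinearMap.mem_ker] at hμ ⊢
    exact key μ fun f hf => hμ ⟨f, hf⟩
  have hspan := mem_span_of_iInf_ker_le_ker hker
  obtain ⟨c, hc⟩ := (Submodule.mem_span_range_iff_exists_fun ℝ).1 hspan
  refine ⟨∑ i : s, c i • (i : C(X, ℝ)), fun μ => ?_⟩
  have h1 : μ (∑ i : s, c i • (i : C(X, ℝ))) = ∑ i : s, c i * μ (i : C(X, ℝ)) := by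
    rw [map_sum]
    exact Finset.sum_congr rfl fun i _ => by rw [map_smul]; rfl
  have h2 := congrArg (fun K : Meas X →ₗ[ℝ] ℝ => K μ) hc
  simp only [LinearMap.coe_sum, Finset.sum_apply, LinearMap.smul_apply] at h2
  calc L μ = ∑ i : s, c i • (evalLM (i : C(X, ℝ)) : Meas X →ₗ[ℝ] ℝ) μ := h2.symm
    _ = ∑ i : s, c i * μ (i : C(X, ℝ)) := rfl
    _ = μ (∑ i : s, c i • (i : C(X, ℝ))) := h1.symm

/-- Representation of continuous linear functionals on `VSp X`. -/
lemma vsp_rep (L : VSp X →L[ℝ] ℝ) :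
    ∃ g h : C(X, ℝ), ∀ p : VSp X, L p = p.1 g + p.2 h := by
  obtain ⟨g, hg⟩ := weakDual_rep (L.comp (ContinuousLinearMap.inl ℝ (Meas X) (Meas X)))
  obtain ⟨h, hh⟩ := weakDual_rep (L.comp (ContinuousLinearMap.inr ℝ (Meas X) (Meas X)))
  refine ⟨g, h, fun p => ?_⟩
  have hsum : p = (p.1, (0 : Meas X)) + ((0 : Meas X), p.2) := by
    ext <;> simp
  have e1 := hg p.1
  have e2 := hh p.2
  simp only [ContinuousLinearMap.comp_apply, ContinuousLinearMap.inl_apply,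
    ContinuousLinearMap.inr_apply] at e1 e2
  calc L p = L (p.1, (0 : Meas X)) + L ((0 : Meas X), p.2) := by rw [← map_add, ← hsum]
    _ = p.1 g + p.2 h := by rw [e1, e2]

lemma mem_hatP_of_mem {P : Set (VSp X)} {p : VSp X} (hp : p ∈ P) : p ∈ hatP P :=
  subset_closure ⟨1, zero_le_one, p, hp, (one_smul ℝ p).symm⟩

/-- A Clausius–Duhem style inequality valid on `P` extends to `hatP P`. -/
lemma cd_ineq_hatP {P : Set (VSp X)} {β η : C(X, ℝ)}
    (h : ∀ p ∈ P, p.2 β ≤ p.1 η) : ∀ p ∈ hatP P, p.2 β ≤ p.1 η := by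
  have hclosed : IsClosed {p : VSp X | p.2 β ≤ p.1 η} :=
    isClosed_le ((WeakDual.eval_continuous β).comp continuous_snd)
      ((WeakDual.eval_continuous η).comp continuous_fst)
  have hcone : coneOf P ⊆ {p : VSp X | p.2 β ≤ p.1 η} := by
    rintro q ⟨c, hc, p, hp, rfl⟩
    simp only [mem_setOf_eq, Prod.smul_fst, Prod.smul_snd, meas_smul_apply]
    exact mul_le_mul_of_nonneg_left (h p hp) hc
  exact fun p hp => closure_minimal hcone hclosed hp

/-- A functional bounded above on the closed cone `hatP P` is nonpositive there. -/
lemma nonpos_on_hatP {P : Set (VSp X)} (f : VSp X →L[ℝ] ℝ) (u : ℝ)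
    (hf : ∀ p ∈ hatP P, f p < u) : ∀ p ∈ hatP P, f p ≤ 0 := by
  have hcone : ∀ q ∈ coneOf P, f q ≤ 0 := by
    rintro q hq
    by_contra hpos
    push_neg at hpos
    obtain ⟨c, hc, p, hp, rfl⟩ := hq
    set d := (|u| + 1) / f (c • p) with hd_def
    have hd : 0 < d := div_pos (by positivity) hpos
    have hmem : (d * c) • p ∈ coneOf P := ⟨d * c, by positivity, p, hp, rfl⟩
    have hlt := hf _ (subset_closure hmem)
    rw [mul_smul, map_smul, smul_eq_mul, hd_def, div_mul_cancel₀ _ (ne_of_gt hpos)] at hlt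
    have := le_abs_self u
    linarith
  exact fun p hp =>
    closure_minimal hcone (isClosed_le f.continuous continuous_const) hp

end AuxProofs

end


noncomputable section MainAux

open Set

variable {X : Type*} [TopologicalSpace X] [CompactSpace X] [T2Space X]

lemma pos_meas_bound {μ : Meas X} (hμ : μ ∈ PosMeas X) (f : C(X, ℝ)) :
    ‖μ f‖ ≤ ‖f‖ * μ (1 : C(X, ℝ)) := by
  have hpt : ∀ x : X, |f x| ≤ ‖f‖ := fun x => by
    simpa [Real.norm_eq_abs] using f.norm_coe_le_norm x
  have h1 : (0 : ℝ) ≤ μ (‖f‖ • (1 : C(X, ℝ)) - f) := by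
    refine hμ _ fun x => ?_
    have := (abs_le.1 (hpt x)).2
    simp only [ContinuousMap.sub_apply, ContinuousMap.smul_apply, ContinuousMap.one_apply,
      smul_eq_mul, mul_one]
    linarith
  have h2 : (0 : ℝ) ≤ μ (‖f‖ • (1 : C(X, ℝ)) + f) := by
    refine hμ _ fun x => ?_
    have := (abs_le.1 (hpt x)).1
    simp only [ContinuousMap.add_apply, ContinuousMap.smul_apply, ContinuousMap.one_apply,
      smul_eq_mul, mul_one]
    linarith
  rw [map_sub, map_smul, smul_eq_mul] at h1
  rw [map_add, map_smul, smul_eq_mul] at h2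
  rw [Real.norm_eq_abs, abs_le]
  constructor <;> linarith

instance : LocallyConvexSpace ℝ (Meas X) :=
  WeakBilin.locallyConvexSpace (B := topDualPairing ℝ C(X, ℝ))

lemma exists_temp_ne (P : Set (VSp X)) (hP : IsKelvinPlanck P) (a b : X)
    (hv : ((0 : Meas X), dirac a - dirac b) ∉ hatP P) :
    ∃ T : C(X, ℝ), IsCDTemp P T ∧ T a ≠ T b := by
  classical
  obtain ⟨⟨hP0, hconv⟩, hKP⟩ := hP
  have hclosed : IsClosed (hatP P) := isClosed_closure
  have h00 : ((0, 0) : VSp X) ∈ hatP P := by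
    have h : ((0, 0) : VSp X) ∈ ({((0 : Meas X), (0 : Meas X))} : Set (VSp X)) := rfl
    rw [← hKP] at h
    exact h.1
  set S : Set (Meas X) := {μ | μ ∈ PosMeas X ∧ μ (1 : C(X, ℝ)) = 1} with hS_def
  have hPosClosed : IsClosed (PosMeas X) := by
    have hEq : PosMeas X =
        ⋂ f ∈ {f : C(X, ℝ) | ∀ x, 0 ≤ f x}, {μ : Meas X | 0 ≤ μ f} := by
      ext μ; simp [PosMeas]
    rw [hEq]
    exact isClosed_biInter fun f _ =>
      isClosed_le continuous_const (WeakDual.eval_continuous f)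
  have hSclosed : IsClosed S := hPosClosed.inter
    (isClosed_eq (WeakDual.eval_continuous 1) continuous_const)
  have hScompact : IsCompact S := by
    refine (WeakDual.isCompact_polar (𝕜 := ℝ)
      (Metric.closedBall_mem_nhds (0 : C(X, ℝ)) one_pos)).of_isClosed_subset hSclosed ?_
    intro μ hμ
    show ∀ f ∈ Metric.closedBall (0 : C(X, ℝ)) 1, ‖μ f‖ ≤ 1
    intro f hf
    have hfn : ‖f‖ ≤ 1 := by simpa [Metric.mem_closedBall, dist_zero_right] using hf
    have := pos_meas_bound hμ.1 f
    rw [hμ.2, mul_one] at this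
    exact this.trans hfn
  have hSconvex : Convex ℝ S := by
    intro μ hμ ν hν α γ hα hγ hαγ
    constructor
    · intro f hf
      have := hμ.1 f hf
      have := hν.1 f hf
      simp only [meas_add_apply, meas_smul_apply]
      positivity
    · simp only [meas_add_apply, meas_smul_apply, hμ.2, hν.2, mul_one]
      exact hαγ
  have hdisj : Disjoint (hatP P) (({(0 : Meas X)} : Set (Meas X)) ×ˢ S) := by
    rw [Set.disjoint_left]
    intro p hp hpK
    rw [Set.mem_prod] at hpK
    have hmem : p ∈ hatP P ∩ (({0} : Set (Meas X)) ×ˢ PosMeas X) :=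
      ⟨hp, Set.mem_prod.2 ⟨hpK.1, hpK.2.1⟩⟩
    rw [hKP] at hmem
    have hp2 : p.2 = 0 := by
      have := hmem
      simp only [Set.mem_singleton_iff] at this
      rw [this]
    have := hpK.2.2
    rw [hp2] at this
    simp [meas_zero_apply] at this
  obtain ⟨f, u, t, hfP, hut, hfK⟩ := geometric_hahn_banach_closed_compact hconv hclosed
    ((convex_singleton (0 : Meas X)).prod hSconvex)
    (isCompact_singleton.prod hScompact) hdisj
  have hu : 0 < u := by
    have h := hfP _ h00
    rw [show ((0, 0) : VSp X) = 0 from rfl, map_zero] at h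
    exact h
  have ht : 0 < t := hu.trans hut
  obtain ⟨g, h, hgh⟩ := vsp_rep f
  have hfle := nonpos_on_hatP f u hfP
  have hineq₀ : ∀ p ∈ hatP P, p.2 h ≤ p.1 (-g) := by
    intro p hp
    have hle := hfle p hp
    rw [hgh] at hle
    rw [map_neg]
    linarith
  have hβ₀pos : ∀ x, t < h x := by
    intro x
    have hdx : dirac x ∈ S := by
      refine ⟨fun f hf => ?_, rfl⟩
      exact hf x
    have hk := hfK ((0 : Meas X), dirac x) (Set.mem_prod.2 ⟨rfl, hdx⟩)
    rw [hgh] at hk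
    simpa [meas_zero_apply, dirac_apply] using hk
  obtain ⟨f₁, u₁, hf₁P, hu₁⟩ := geometric_hahn_banach_closed_point hconv hclosed hv
  obtain ⟨g₁, h₁, hgh₁⟩ := vsp_rep f₁
  have hfle₁ := nonpos_on_hatP f₁ u₁ hf₁P
  have hineq₁ : ∀ p ∈ hatP P, p.2 h₁ ≤ p.1 (-g₁) := by
    intro p hp
    have hle := hfle₁ p hp
    rw [hgh₁] at hle
    rw [map_neg]
    linarith
  have hu₁pos : 0 < u₁ := by
    have hz := hf₁P _ h00
    rw [show ((0, 0) : VSp X) = 0 from rfl, map_zero] at hz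
    exact hz
  have hav : 0 < h₁ a - h₁ b := by
    have h0lt : 0 < f₁ ((0 : Meas X), dirac a - dirac b) := hu₁pos.trans hu₁
    rw [hgh₁] at h0lt
    simpa [meas_zero_apply, meas_sub_apply, dirac_apply] using h0lt
  obtain ⟨β, η, hpos, hineq, hne⟩ :
      ∃ β η : C(X, ℝ), (∀ x, 0 < β x) ∧ (∀ p ∈ hatP P, p.2 β ≤ p.1 η) ∧ β a ≠ β b := by
    by_cases hcase : h a = h b
    · set lam := (‖h₁‖ + 1) / t with hlam_def
      have hlam : 0 < lam := div_pos (by positivity) ht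
      have hlamt : lam * t = ‖h₁‖ + 1 := div_mul_cancel₀ _ (ne_of_gt ht)
      refine ⟨h₁ + lam • h, -g₁ + lam • (-g), fun x => ?_, fun p hp => ?_, ?_⟩
      · have hb1 : -‖h₁‖ ≤ h₁ x := by
          have := h₁.norm_coe_le_norm x
          rw [Real.norm_eq_abs] at this
          linarith [(abs_le.1 this).1]
        have hb2 : lam * t < lam * h x := by
          exact mul_lt_mul_of_pos_left (hβ₀pos x) hlam
        simp only [ContinuousMap.add_apply, ContinuousMap.smul_apply, smul_eq_mul]
        nlinarith
      · have e1 := hineq₁ p hp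
        have e2 := hineq₀ p hp
        have e2' : lam * p.2 h ≤ lam * p.1 (-g) := mul_le_mul_of_nonneg_left e2 hlam.le
        rw [map_add, map_add, map_smul, map_smul, smul_eq_mul, smul_eq_mul]
        linarith
      · simp only [ContinuousMap.add_apply, ContinuousMap.smul_apply, smul_eq_mul, hcase]
        intro hEq
        have : h₁ a = h₁ b := by linarith
        linarith
    · exact ⟨h, -g, fun x => ht.trans (hβ₀pos x), hineq₀, hcase⟩
  refine ⟨⟨fun x => (β x)⁻¹, β.continuous.inv₀ fun x => (hpos x).ne'⟩, ⟨η, ?_, ?_⟩, ?_⟩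
  · intro x
    simp only [ContinuousMap.coe_mk]
    exact inv_pos.2 (hpos x)
  · intro β' hβ' p hp
    have hβ'β : β' = β := by
      ext x
      have := hβ' x
      simp only [ContinuousMap.coe_mk] at this
      rw [this, inv_inv]
    rw [hβ'β]
    exact hineq p (mem_hatP_of_mem hp)
  · simp only [ContinuousMap.coe_mk]
    intro hEq
    exact hne (inv_inj.1 hEq)

end MainAux

/-- **Theorem.** For states `a`, `b` of a Kelvin–Planck theory `(X, P)` the following
are equivalent: (i) `a` and `b` are of the same hotness; (ii) `T a = T b` for every
Clausius–Duhem temperature scale `T`. -/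
theorem same_hotness_iff_equal_temperature
    {X : Type*} [TopologicalSpace X] [CompactSpace X] [T2Space X]
    (P : Set (VSp X)) (hP : IsKelvinPlanck P) (a b : X) :
    SameHotness P a b ↔ ∀ T : C(X, ℝ), IsCDTemp P T → T a = T b := by
  constructor
  · rintro ⟨h1, h2⟩ T ⟨η, hTpos, hCD⟩
    set β : C(X, ℝ) := ⟨fun x => (T x)⁻¹, T.continuous.inv₀ fun x => (hTpos x).ne'⟩ with hβ_def
    have hPle : ∀ p ∈ P, p.2 β ≤ p.1 η := hCD β fun x => rfl
    have hhat := cd_ineq_hatP hPle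
    have e1 := hhat _ h1
    have e2 := hhat _ h2
    simp only [meas_zero_apply, meas_sub_apply, dirac_apply] at e1 e2
    have hββ : β a = β b := le_antisymm (by linarith) (by linarith)
    simp only [hβ_def, ContinuousMap.coe_mk] at hββ
    exact inv_inj.1 hββ
  · intro hT
    by_contra hns
    rcases not_and_or.1 hns with h | h
    · obtain ⟨T, hTcd, hTne⟩ := exists_temp_ne P hP a b h
      exact hTne (hT T hTcd)
    · obtain ⟨T, hTcd, hTne⟩ := exists_temp_ne P hP b a h
      exact hTne (hT T hTcd).symm
end

section
/- Let (Σ,P) be a Kelvin–Planck theory for which all Clausius–Duhem temperature scales on Σ are positive multiples of some fixed one, T. Then the reversible cyclic elements of (Σ,P) are precisely those (0,q) ∈ V(Σ) satisfying ∫_Σ (1/T) dq = 0; in particular every such (0,q) belongs to \hat{P}. Moreover, of those (0,q) ∈ V(Σ) satisfying ∫_Σ (1/T) dq < 0, either all are contained in \hat{P} or none are. -/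
open Set

noncomputable section AuxiliaryLemmas

/-- Every continuous linear functional on a weak-star dual is evaluation at a point
of the predual. -/
theorem weakDual_exists_rep' {E : Type*} [AddCommGroup E] [Module ℝ E] [TopologicalSpace E]
    (L : WeakDual ℝ E →L[ℝ] ℝ) : ∃ f : E, ∀ μ : WeakDual ℝ E, L μ = μ f := by
  classical
  have hb := LinearMap.hasBasis_weakBilin (topDualPairing ℝ E)
  have h1 : L ⁻¹' Metric.ball 0 1 ∈ nhds (0 : WeakDual ℝ E) := by
    have : Metric.ball (0:ℝ) 1 ∈ nhds (L 0) := by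
      rw [map_zero]; exact Metric.ball_mem_nhds 0 one_pos
    exact L.continuous.continuousAt.preimage_mem_nhds this
  obtain ⟨U, hU, hUsub⟩ := hb.mem_iff.mp h1
  obtain ⟨I, r, hr, rfl⟩ := (SeminormFamily.basisSets_iff _).mp hU
  have hker : ∀ μ : WeakDual ℝ E, (∀ f ∈ I, μ f = 0) → L μ = 0 := by
    intro μ hμ
    by_contra h0
    set c : ℝ := 2 / |L μ| with hc
    have habs : 0 < |L μ| := abs_pos.mpr h0
    have hmem : (c • μ : WeakDual ℝ E) ∈
        (I.sup ((topDualPairing ℝ E).toSeminormFamily)).ball 0 r := by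
      refine (Seminorm.mem_ball_zero _).2 ?_
      apply Seminorm.finset_sup_apply_lt hr
      intro f hf
      show ‖c * μ f‖ < r
      rw [hμ f hf, mul_zero, norm_zero]
      exact hr
    have h2 : (c • μ : WeakDual ℝ E) ∈ L ⁻¹' Metric.ball 0 1 := hUsub hmem
    simp only [Set.mem_preimage, Metric.mem_ball, dist_zero_right, Real.norm_eq_abs] at h2
    have : L (c • μ : WeakDual ℝ E) = c * L μ := by
      rw [map_smul]; rfl
    rw [this, abs_mul, hc, abs_div, abs_two, abs_abs,
      div_mul_cancel₀ 2 habs.ne'] at h2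
    norm_num at h2
  let φ : I → (WeakDual ℝ E →ₗ[ℝ] ℝ) := fun f =>
    { toFun := fun μ => μ (f : E)
      map_add' := fun μ ν => rfl
      map_smul' := fun c μ => rfl }
  have hK : ⨅ i : I, LinearMap.ker (φ i) ≤ LinearMap.ker (L : WeakDual ℝ E →ₗ[ℝ] ℝ) := by
    intro μ hμ
    simp only [Submodule.mem_iInf, LinearMap.mem_ker] at hμ ⊢
    exact hker μ (fun f hf => hμ ⟨f, hf⟩)
  have hspan := mem_span_of_iInf_ker_le_ker hK
  obtain ⟨cc, hcc⟩ := (Submodule.mem_span_range_iff_exists_fun ℝ).1 hspan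
  refine ⟨∑ i : I, cc i • (i : E), fun μ => ?_⟩
  have : (∑ i : I, cc i • φ i) μ = L μ := by rw [hcc]; rfl
  rw [← this, map_sum]
  simp only [LinearMap.sum_apply, LinearMap.smul_apply, map_smul, smul_eq_mul]
  rfl

variable {X : Type*} [TopologicalSpace X]

lemma hatP_smul_mem {P : Set (VSp X)} {c : ℝ} (hc : 0 ≤ c) {x : VSp X}
    (hx : x ∈ hatP P) : c • x ∈ hatP P := by
  refine map_mem_closure (continuous_const_smul c) hx ?_
  rintro y ⟨c', hc', p, hp, rfl⟩
  exact ⟨c * c', mul_nonneg hc hc', p, hp, (smul_smul c c' p)⟩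

lemma hatP_zero_mem {P : Set (VSp X)} (hP : IsKelvinPlanck P) :
    ((0, 0) : VSp X) ∈ hatP P := by
  have h : ((0, 0) : VSp X) ∈ hatP P ∩ (({0} : Set (Meas X)) ×ˢ PosMeas X) := by
    rw [hP.2]; rfl
  exact h.1

lemma hatP_add_mem {P : Set (VSp X)} (hconv : Convex ℝ (hatP P)) {x y : VSp X}
    (hx : x ∈ hatP P) (hy : y ∈ hatP P) : x + y ∈ hatP P := by
  have h := hconv hx hy (by norm_num : (0:ℝ) ≤ 1/2) (by norm_num : (0:ℝ) ≤ 1/2)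
    (by norm_num)
  have h2 := hatP_smul_mem (by norm_num : (0:ℝ) ≤ 2) h
  have e : (2:ℝ) • ((1/2 : ℝ) • x + (1/2 : ℝ) • y) = x + y := by module
  rwa [e] at h2

lemma hatP_ineq {P : Set (VSp X)} {a b : C(X, ℝ)} (h : ∀ p ∈ P, p.2 b ≤ p.1 a) :
    ∀ p ∈ hatP P, p.2 b ≤ p.1 a := by
  intro p hp
  have hclosed : IsClosed {p : VSp X | p.2 b ≤ p.1 a} :=
    isClosed_le ((WeakBilin.eval_continuous _ b).comp continuous_snd)
      ((WeakBilin.eval_continuous _ a).comp continuous_fst)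
  refine closure_minimal ?_ hclosed hp
  rintro y ⟨c, hc, p', hp', rfl⟩
  show (c • p').2 b ≤ (c • p').1 a
  have e1 : (c • p').2 b = c * p'.2 b := rfl
  have e2 : (c • p').1 a = c * p'.1 a := rfl
  rw [e1, e2]
  exact mul_le_mul_of_nonneg_left (h p' hp') hc

lemma key_mem {X : Type*} [TopologicalSpace X] [CompactSpace X]
    (P : Set (VSp X)) (hP : IsKelvinPlanck P)
    (η T β : C(X, ℝ)) (hpair : IsCDPair P η T) (hβ : ∀ x, β x = (T x)⁻¹)
    (huniq : ∀ T' : C(X, ℝ), IsCDTemp P T' → ∃ α : ℝ, 0 < α ∧ T' = α • T)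
    (q0 : Meas X) (hq0 : q0 β = 0) : ((0 : Meas X), q0) ∈ hatP P := by
  rcases isEmpty_or_nonempty X with hX | hX
  · have hq00 : q0 = 0 := by
      apply DFunLike.ext
      intro φ
      have hφ : φ = 0 := by ext x; exact isEmptyElim x
      rw [hφ, map_zero]; rfl
    rw [hq00]; exact hatP_zero_mem hP
  by_contra hq
  haveI : LocallyConvexSpace ℝ (Meas X) :=
    WeakBilin.locallyConvexSpace (B := topDualPairing ℝ C(X, ℝ))
  obtain ⟨L, u, hLlt, hLx⟩ :=
    geometric_hahn_banach_closed_point hP.1.2 isClosed_closure hq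
  have hu : 0 < u := by
    have h := hLlt _ (hatP_zero_mem hP)
    have hz : L ((0, 0) : VSp X) = 0 := by
      rw [show ((0, 0) : VSp X) = 0 from rfl, map_zero]
    linarith
  have hL0 : ∀ p ∈ hatP P, L p ≤ 0 := by
    intro p hp
    by_contra hpos
    push_neg at hpos
    have hmem := hatP_smul_mem (le_of_lt (div_pos hu hpos)) hp
    have h := hLlt _ hmem
    rw [map_smul, smul_eq_mul, div_mul_cancel₀ u (ne_of_gt hpos)] at h
    exact lt_irrefl u h
  obtain ⟨f, hf⟩ :=
    weakDual_exists_rep' (L.comp (ContinuousLinearMap.inl ℝ (Meas X) (Meas X)))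
  obtain ⟨g, hg⟩ :=
    weakDual_exists_rep' (L.comp (ContinuousLinearMap.inr ℝ (Meas X) (Meas X)))
  have hLsplit : ∀ p : VSp X, L p = p.1 f + p.2 g := by
    intro p
    have hsum : (p.1, (0 : Meas X)) + ((0 : Meas X), p.2) = p := by
      rw [Prod.mk_add_mk, add_zero, zero_add]
    have hL2 : L p = L ((p.1, (0 : Meas X)) + ((0 : Meas X), p.2)) := by rw [hsum]
    rw [hL2, map_add, ← hf p.1, ← hg p.2]
    rfl
  have hq0g : 0 < q0 g := by
    have h2 := hLsplit ((0 : Meas X), q0)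
    have h3 : ((0 : Meas X)) f = 0 := rfl
    simp only at h2
    rw [h3, zero_add] at h2
    rw [h2] at hLx
    linarith
  -- construct a new Clausius–Duhem temperature scale
  have hT := hpair.1
  have hβpos : ∀ x, 0 < β x := fun x => by rw [hβ x]; exact inv_pos.mpr (hT x)
  obtain ⟨x₀, -, hx₀⟩ :=
    isCompact_univ.exists_isMinOn univ_nonempty β.continuous.continuousOn
  set m := β x₀ with hm
  have hmpos : 0 < m := hβpos x₀
  set ε := m / (‖g‖ + 1) with hε
  have hgnorm : (0:ℝ) ≤ ‖g‖ := norm_nonneg g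
  have hεpos : 0 < ε := div_pos hmpos (by linarith)
  have hεeq : ε * (‖g‖ + 1) = m := div_mul_cancel₀ m (by linarith)
  have hpos : ∀ x, 0 < β x + ε * g x := by
    intro x
    have h1 : m ≤ β x := (isMinOn_iff.mp hx₀) x (mem_univ x)
    have h2 : |g x| ≤ ‖g‖ := by
      have h := g.norm_coe_le_norm x
      rwa [Real.norm_eq_abs] at h
    have h3 : -‖g‖ ≤ g x := (abs_le.mp h2).1
    nlinarith
  set Tn : C(X, ℝ) := ⟨fun x => (β x + ε * g x)⁻¹,
    ((β.continuous.add (continuous_const.mul g.continuous)).inv₀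
      (fun x => (hpos x).ne'))⟩ with hTn
  have hPg : ∀ p ∈ P, p.2 g ≤ -(p.1 f) := by
    intro p hp
    have hmem : p ∈ hatP P :=
      subset_closure ⟨1, zero_le_one, p, hp, (one_smul ℝ p).symm⟩
    have h := hL0 p hmem
    rw [hLsplit p] at h
    linarith
  have hCD : IsCDTemp P Tn := by
    refine ⟨η - ε • f, fun x => inv_pos.mpr (hpos x), ?_⟩
    intro β' hβ' p hp
    have hβ'eq : β' = β + ε • g := by
      ext x
      have hTnx : Tn x = (β x + ε * g x)⁻¹ := rfl
      rw [hβ' x, hTnx, inv_inv]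
      simp [ContinuousMap.add_apply, ContinuousMap.smul_apply, smul_eq_mul]
    have e1 : p.2 β' = p.2 β + ε * p.2 g := by
      rw [hβ'eq, map_add, map_smul, smul_eq_mul]
    have e2 : p.1 (η - ε • f) = p.1 η - ε * p.1 f := by
      rw [map_sub, map_smul, smul_eq_mul]
    rw [e1, e2]
    have h1 := hpair.2 β hβ p hp
    have h2 := hPg p hp
    have h3 := mul_le_mul_of_nonneg_left h2 hεpos.le
    linarith
  obtain ⟨α, hα, hTeq⟩ := huniq Tn hCD
  set c := (α⁻¹ - 1) / ε with hced
  have hgc : g = c • β := by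
    ext x
    have h1 : (β x + ε * g x)⁻¹ = α * T x := by
      have h0 := congrArg (fun φ : C(X, ℝ) => φ x) hTeq
      simp only [ContinuousMap.smul_apply, smul_eq_mul] at h0
      exact h0
    have hTx : T x = (β x)⁻¹ := by rw [hβ x, inv_inv]
    have h2 : β x + ε * g x = α⁻¹ * β x := by
      have h3 := congrArg Inv.inv h1
      rwa [inv_inv, hTx, mul_inv, inv_inv] at h3
    have h2' : α * (β x + ε * g x) = β x := by
      rw [h2, ← mul_assoc, mul_inv_cancel₀ hα.ne', one_mul]
    show g x = c * β x
    rw [hced]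
    field_simp
    linarith
  have hzero : q0 g = 0 := by
    have e : q0 (c • β) = c * q0 β := by rw [map_smul, smul_eq_mul]
    rw [hgc, e, hq0, mul_zero]
  linarith

end AuxiliaryLemmas

/-- **Corollary.** Let `(X, P)` be a Kelvin–Planck theory all of whose
Clausius–Duhem temperature scales are positive multiples of a fixed one, `T`
(with entropy partner `η`, and `β = 1/T`).  Then the reversible cyclic elements of
`(X, P)` are precisely the `(0, q) ∈ V(X)` with `∫ (1/T) dq = 0` (in particular,
every such `(0, q)` lies in `\hat P`); and of the `(0, q)` with `∫ (1/T) dq < 0`,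
either all belong to `\hat P` or none do. -/
theorem reversible_cyclic_elements_characterization
    {X : Type*} [TopologicalSpace X] [CompactSpace X] [T2Space X]
    (P : Set (VSp X)) (hP : IsKelvinPlanck P)
    (η T β : C(X, ℝ)) (hpair : IsCDPair P η T) (hβ : ∀ x, β x = (T x)⁻¹)
    (huniq : ∀ T' : C(X, ℝ), IsCDTemp P T' → ∃ α : ℝ, 0 < α ∧ T' = α • T) :
    (∀ q : Meas X,
      (((0 : Meas X), q) ∈ hatP P ∧ -(((0 : Meas X), q) : VSp X) ∈ hatP P) ↔
        q β = 0) ∧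
    ((∃ q : Meas X, q β < 0 ∧ ((0 : Meas X), q) ∈ hatP P) →
      ∀ q : Meas X, q β < 0 → ((0 : Meas X), q) ∈ hatP P) := by
  have hkey : ∀ q : Meas X, q β = 0 → ((0 : Meas X), q) ∈ hatP P :=
    fun q hq => key_mem P hP η T β hpair hβ huniq q hq
  have hfwd : ∀ p ∈ hatP P, p.2 β ≤ p.1 η := hatP_ineq (hpair.2 β hβ)
  constructor
  · intro q
    constructor
    · rintro ⟨h1, h2⟩
      have e1 := hfwd _ h1
      have e2 := hfwd _ h2
      have z1 : ((0 : Meas X)) η = 0 := rfl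
      have hneg : (-(((0 : Meas X), q) : VSp X)) = ((0 : Meas X), -q) := by
        rw [Prod.neg_mk, neg_zero]
      rw [hneg] at e2
      have z2 : (-q) β = -(q β) := rfl
      simp only at e1 e2
      rw [z1] at e1
      rw [z2, z1] at e2
      linarith
    · intro hq
      refine ⟨hkey q hq, ?_⟩
      have hnegq : (-q) β = 0 := by
        have z : (-q) β = -(q β) := rfl
        rw [z, hq, neg_zero]
      have h2 := hkey (-q) hnegq
      have hneg : (-(((0 : Meas X), q) : VSp X)) = ((0 : Meas X), -q) := by
        rw [Prod.neg_mk, neg_zero]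
      rw [hneg]
      exact h2
  · rintro ⟨q1, hq1neg, hq1mem⟩ q hqneg
    set s := q β / q1 β with hs
    have hq1ne : q1 β ≠ 0 := ne_of_lt hq1neg
    have hspos : 0 < s := div_pos_of_neg_of_neg hqneg hq1neg
    have hzero : (q - s • q1) β = 0 := by
      have e : (q - s • q1) β = q β - s * q1 β := rfl
      rw [e, hs, div_mul_cancel₀ _ hq1ne, sub_self]
    have h1 := hkey _ hzero
    have h2 := hatP_smul_mem hspos.le hq1mem
    have h3 := hatP_add_mem hP.1.2 h1 h2
    have e2 : (((0 : Meas X), q - s • q1) : VSp X) + s • (((0 : Meas X), q1) : VSp X)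
        = ((0 : Meas X), q) := by
      rw [Prod.smul_mk, smul_zero, Prod.mk_add_mk, add_zero, sub_add_cancel]
    rwa [e2] at h3
end

section
/- Let (Σ,P) be a Kelvin–Planck theory for which all Clausius–Duhem temperature scales on Σ are positive multiples of some fixed one. Then the set of all linear combinations of Carnot elements of (Σ,P) is dense in the set of all reversible cyclic elements of (Σ,P). -/
open Set

section CarnotAux

open Filter Topology

variable {X : Type*} [TopologicalSpace X]

/-- Local instance: the weak-star dual is locally convex. -/
instance measLocallyConvex : LocallyConvexSpace ℝ (Meas X) :=
  WeakBilin.locallyConvexSpace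

/-- Every weak-star continuous linear functional on `Meas X` is evaluation at some
continuous function. -/
theorem rep_weakdual (F : Meas X →L[ℝ] ℝ) : ∃ g : C(X, ℝ), ∀ μ : Meas X, F μ = μ g := by
  classical
  set B := topDualPairing ℝ C(X, ℝ) with hB
  have h1 : F ⁻¹' Metric.ball (0 : ℝ) 1 ∈ 𝓝 (0 : Meas X) :=
    F.continuous.continuousAt.preimage_mem_nhds
      (by rw [map_zero]; exact Metric.ball_mem_nhds _ one_pos)
  obtain ⟨U, hU, hUsub⟩ := (LinearMap.hasBasis_weakBilin B).mem_iff.1 h1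
  obtain ⟨s, r, hr, rfl⟩ := (SeminormFamily.basisSets_iff B.toSeminormFamily).1 hU
  have key : ∀ μ : Meas X, (∀ y ∈ s, μ y = 0) → F μ = 0 := by
    intro μ hμ
    by_contra h0
    have ht : ∀ t : ℝ, t • μ ∈ Seminorm.ball (s.sup B.toSeminormFamily) 0 r := by
      intro t
      apply (Seminorm.mem_ball_zero _).2
      refine Seminorm.finset_sup_apply_lt hr fun y hy => ?_
      change ‖B (t • μ) y‖ < r
      have hzero : B (t • μ) y = 0 := by
        have : (t • μ) y = t • (μ y) := rfl
        change (t • μ) y = 0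
        rw [this, hμ y hy, smul_zero]
      exact (norm_eq_zero.mpr hzero).trans_lt hr
    have hball : F ((2 / F μ) • μ) ∈ Metric.ball (0:ℝ) 1 := hUsub (ht (2 / F μ))
    rw [Metric.mem_ball, dist_zero_right, map_smul, smul_eq_mul,
      div_mul_cancel₀ _ h0] at hball
    norm_num at hball
  let L : s → (Meas X →ₗ[ℝ] ℝ) := fun y => B.flip (y : C(X, ℝ))
  have hker : ⨅ i, LinearMap.ker (L i) ≤ LinearMap.ker (F : Meas X →ₗ[ℝ] ℝ) := by
    intro μ hμ
    simp only [Submodule.mem_iInf, LinearMap.mem_ker] at hμ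
    exact LinearMap.mem_ker.2 (key μ fun y hy => hμ ⟨y, hy⟩)
  have hspan := mem_span_of_iInf_ker_le_ker (𝕜 := ℝ) hker
  obtain ⟨c, hc⟩ := (Submodule.mem_span_range_iff_exists_fun ℝ).1 hspan
  refine ⟨∑ i : s, c i • (i : C(X, ℝ)), fun μ => ?_⟩
  have hFμ := congrArg (fun G : Meas X →ₗ[ℝ] ℝ => G μ) hc
  simp only [LinearMap.coe_sum, Finset.sum_apply, LinearMap.smul_apply] at hFμ
  calc F μ = ∑ i : s, c i • (L i μ) := hFμ.symm
    _ = μ (∑ i : s, c i • (i : C(X, ℝ))) := by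
        rw [map_sum]
        refine Finset.sum_congr rfl fun i _ => ?_
        rw [map_smul]
        rfl

/-- Every weak-star continuous linear functional on `VSp X` is represented by a
pair of continuous functions. -/
theorem rep_vsp (F : VSp X →L[ℝ] ℝ) :
    ∃ g β : C(X, ℝ), ∀ p : VSp X, F p = p.1 g + p.2 β := by
  obtain ⟨g, hg⟩ := rep_weakdual (F.comp (ContinuousLinearMap.inl ℝ (Meas X) (Meas X)))
  obtain ⟨β, hβ⟩ := rep_weakdual (F.comp (ContinuousLinearMap.inr ℝ (Meas X) (Meas X)))
  refine ⟨g, β, fun p => ?_⟩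
  have hp : ((p.1, (0 : Meas X)) : VSp X) + (((0 : Meas X), p.2) : VSp X) = p := by
    ext <;> simp
  have h1 := hg p.1
  have h2 := hβ p.2
  simp only [ContinuousLinearMap.comp_apply, ContinuousLinearMap.inl_apply,
    ContinuousLinearMap.inr_apply] at h1 h2
  calc F p = F ((p.1, (0 : Meas X)) : VSp X) + F (((0 : Meas X), p.2) : VSp X) := by
        rw [← map_add, hp]
    _ = p.1 g + p.2 β := by rw [h1, h2]

theorem subset_hatP (P : Set (VSp X)) : P ⊆ hatP P := fun p hp =>
  subset_closure ⟨1, zero_le_one, p, hp, (one_smul ℝ p).symm⟩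

theorem smul_mem_hatP {P : Set (VSp X)} {c : ℝ} (hc : 0 ≤ c) {p : VSp X}
    (hp : p ∈ hatP P) : c • p ∈ hatP P := by
  have hmaps : Set.MapsTo (fun x : VSp X => c • x) (coneOf P) (coneOf P) := by
    rintro x ⟨c', hc', q, hq, rfl⟩
    exact ⟨c * c', mul_nonneg hc hc', q, hq, (smul_smul c c' q)⟩
  exact map_mem_closure (continuous_const_smul c) hp hmaps

theorem zero_mem_hatP {P : Set (VSp X)} (hP : IsKelvinPlanck P) : (0 : VSp X) ∈ hatP P := by
  have h : (((0 : Meas X), (0 : Meas X)) : VSp X) ∈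
      hatP P ∩ (({0} : Set (Meas X)) ×ˢ PosMeas X) := by
    rw [hP.2]; exact Set.mem_singleton _
  exact h.1

theorem cd_hatP {P : Set (VSp X)} {η β₀ : C(X, ℝ)} (h : ∀ p ∈ P, p.2 β₀ ≤ p.1 η) :
    ∀ p ∈ hatP P, p.2 β₀ ≤ p.1 η := by
  have hcl : IsClosed {p : VSp X | p.2 β₀ ≤ p.1 η} :=
    isClosed_le ((WeakDual.eval_continuous β₀).comp continuous_snd)
      ((WeakDual.eval_continuous η).comp continuous_fst)
  intro p hp
  refine closure_minimal ?_ hcl hp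
  rintro x ⟨c, hc, q, hq, rfl⟩
  have e2 : ((c • q).2) β₀ = c * (q.2 β₀) := rfl
  have e1 : ((c • q).1) η = c * (q.1 η) := rfl
  simp only [Set.mem_setOf_eq, e1, e2]
  exact mul_le_mul_of_nonneg_left (h q hq) hc

/-- Key consequence of essential uniqueness of the Clausius–Duhem temperature
scale: the `heat` component of any continuous linear functional nonnegative on
`P` is a multiple of the reciprocal temperature. -/
theorem coldness_proportional [CompactSpace X] [Nonempty X]
    {P : Set (VSp X)} (T : C(X, ℝ)) (hT : IsCDTemp P T)
    (huniq : ∀ T' : C(X, ℝ), IsCDTemp P T' → ∃ α : ℝ, 0 < α ∧ T' = α • T)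
    {η₂ γ₂ : C(X, ℝ)} (h : ∀ p ∈ P, 0 ≤ p.1 η₂ + p.2 γ₂) :
    ∃ l : ℝ, ∀ x, γ₂ x = l * (T x)⁻¹ := by
  obtain ⟨η, hTpos, hCD⟩ := hT
  set β₀ : C(X, ℝ) := ⟨fun x => (T x)⁻¹,
    (map_continuous T).inv₀ fun x => (hTpos x).ne'⟩ with hβ₀def
  set β'' : C(X, ℝ) := -γ₂ with hβ''def
  obtain ⟨x₀, -, hx₀⟩ := isCompact_univ.exists_isMinOn Set.univ_nonempty
    ((map_continuous β₀).continuousOn (s := Set.univ))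
  set m : ℝ := β₀ x₀ with hm
  have hm0 : 0 < m := inv_pos.2 (hTpos x₀)
  have hmle : ∀ x, m ≤ β₀ x := fun x => hx₀ (Set.mem_univ x)
  set t : ℝ := m / (2 * (‖β''‖ + 1)) with htdef
  have hden : (0:ℝ) < ‖β''‖ + 1 := by positivity
  have ht : 0 < t := by positivity
  have htle : t * (‖β''‖ + 1) = m / 2 := by
    rw [htdef]; field_simp
  have hpos : ∀ x, 0 < β₀ x + t * β'' x := by
    intro x
    have hb : |β'' x| ≤ ‖β''‖ := by
      have := ContinuousMap.norm_coe_le_norm β'' x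
      simpa [Real.norm_eq_abs] using this
    have h2 : -(m / 2) ≤ t * β'' x := by
      have h3 : t * ‖β''‖ ≤ m / 2 := by nlinarith [norm_nonneg β'']
      have h4 : -‖β''‖ ≤ β'' x := (abs_le.1 hb).1
      nlinarith
    have := hmle x
    linarith
  set β' : C(X, ℝ) := β₀ + t • β'' with hβ'def
  have hβ'x : ∀ x, β' x = β₀ x + t * β'' x := fun x => rfl
  have hβ'pos : ∀ x, 0 < β' x := fun x => by rw [hβ'x]; exact hpos x
  set T' : C(X, ℝ) := ⟨fun x => (β' x)⁻¹,
    (map_continuous β').inv₀ fun x => (hβ'pos x).ne'⟩ with hT'def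
  have hT' : IsCDTemp P T' := by
    refine ⟨η + t • η₂, fun x => inv_pos.2 (hβ'pos x), ?_⟩
    intro βt hβt p hp
    have hβtβ' : βt = β' := by
      ext x
      rw [hβt x]
      show ((β' x)⁻¹)⁻¹ = β' x
      exact inv_inv _
    rw [hβtβ']
    have e1 : p.2 β' = p.2 β₀ + t * p.2 β'' := by
      rw [hβ'def, map_add, map_smul]; rfl
    have e2 : p.1 (η + t • η₂) = p.1 η + t * p.1 η₂ := by
      rw [map_add, map_smul]; rfl
    have h3 : p.2 β₀ ≤ p.1 η := hCD β₀ (fun _ => rfl) p hp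
    have h4 : p.2 β'' ≤ p.1 η₂ := by
      have := h p hp
      have e3 : p.2 β'' = -(p.2 γ₂) := by rw [hβ''def, map_neg]
      linarith
    rw [e1, e2]
    have := mul_le_mul_of_nonneg_left h4 ht.le
    linarith
  obtain ⟨α, hα, hTT⟩ := huniq T' hT'
  have hTx : ∀ x, (β' x)⁻¹ = α * T x := by
    intro x
    have := congrArg (fun f : C(X, ℝ) => f x) hTT
    simp only [ContinuousMap.smul_apply, smul_eq_mul] at this; exact this
  have hβ'eq : ∀ x, β' x = α⁻¹ * (T x)⁻¹ := by
    intro x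
    rw [← inv_inv (β' x), hTx x, mul_inv]
  refine ⟨(1 - α⁻¹) / t, fun x => ?_⟩
  have h5 : β₀ x + t * β'' x = α⁻¹ * (T x)⁻¹ := by rw [← hβ'x, hβ'eq]
  have h6 : β₀ x = (T x)⁻¹ := rfl
  have h7 : γ₂ x = -(β'' x) := by
    have : β'' x = -(γ₂ x) := rfl
    linarith
  rw [h7]
  have ht0 : t ≠ 0 := ht.ne'
  rw [h6] at h5
  have h8 : t * β'' x = α⁻¹ * (T x)⁻¹ - (T x)⁻¹ := by linarith
  have h9 : -β'' x * t = (1 - α⁻¹) * (T x)⁻¹ := by nlinarith [h8]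
  rw [div_mul_eq_mul_div, eq_div_iff ht0]
  exact h9

/-- Under essential uniqueness of the Clausius–Duhem temperature scale, every
pair `(0, q)` with `∫ (1/T) dq = 0` belongs to `\hat P`. -/
theorem cyclic_mem_hatP [CompactSpace X] [Nonempty X]
    {P : Set (VSp X)} (hP : IsKelvinPlanck P) (T : C(X, ℝ)) (hT : IsCDTemp P T)
    (huniq : ∀ T' : C(X, ℝ), IsCDTemp P T' → ∃ α : ℝ, 0 < α ∧ T' = α • T)
    (β₀ : C(X, ℝ)) (hβ₀ : ∀ x, β₀ x = (T x)⁻¹)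
    (q : Meas X) (hq : q β₀ = 0) : (((0 : Meas X), q) : VSp X) ∈ hatP P := by
  by_contra hnot
  obtain ⟨f, u, hfK, hu⟩ := geometric_hahn_banach_closed_point hP.1.2 isClosed_closure hnot
  have hu0 : 0 < u := by
    have := hfK 0 (zero_mem_hatP hP)
    rwa [map_zero] at this
  have hle : ∀ p ∈ hatP P, f p ≤ 0 := by
    intro p hp
    by_contra hpos
    push_neg at hpos
    have hc : (0:ℝ) ≤ (u + 1) / f p := le_of_lt (div_pos (by linarith) hpos)
    have := hfK (((u + 1) / f p) • p) (smul_mem_hatP hc hp)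
    rw [map_smul, smul_eq_mul, div_mul_cancel₀ _ hpos.ne'] at this
    linarith
  obtain ⟨g, β, hrep⟩ := rep_vsp f
  have hP' : ∀ p ∈ P, 0 ≤ p.1 (-g) + p.2 (-β) := by
    intro p hp
    have h1 := hle p (subset_hatP P hp)
    rw [hrep] at h1
    rw [map_neg, map_neg]
    linarith
  obtain ⟨l, hl⟩ := coldness_proportional T hT huniq hP'
  have hβeq : β = (-l) • β₀ := by
    ext x
    have h2 := hl x
    rw [ContinuousMap.neg_apply] at h2
    have h3 : ((-l) • β₀) x = (-l) * β₀ x := rfl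
    rw [h3, hβ₀ x]
    linarith
  have hf0 : f (((0 : Meas X), q) : VSp X) = 0 := by
    rw [hrep]
    have e0 : ((0 : Meas X)) g = 0 := rfl
    rw [e0, hβeq, map_smul, smul_eq_mul, hq]
    ring
  rw [hf0] at hu
  linarith

/-- Between any two states there is a Carnot element given by scaled Dirac
measures. -/
theorem carnot_dirac [CompactSpace X]
    {P : Set (VSp X)} (hP : IsKelvinPlanck P) (T : C(X, ℝ)) (hT : IsCDTemp P T)
    (huniq : ∀ T' : C(X, ℝ), IsCDTemp P T' → ∃ α : ℝ, 0 < α ∧ T' = α • T)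
    (β₀ : C(X, ℝ)) (hβ₀ : ∀ x, β₀ x = (T x)⁻¹) (a b : X) :
    IsCarnotBetween P (hotnessLevel P a) (hotnessLevel P b)
      (((0 : Meas X), T a • dirac a - T b • dirac b) : VSp X) := by
  have hne : Nonempty X := ⟨a⟩
  obtain ⟨η, hTpos, hCD⟩ := id hT
  set μ' : Meas X := T a • dirac a with hμ'def
  set μ : Meas X := T b • dirac b with hμdef
  have happ : ∀ (c : ℝ) (x : X) (h : C(X, ℝ)), ((c • dirac x : Meas X)) h = c * h x :=
    fun c x h => rfl
  have hqβ₀ : (μ' - μ) β₀ = 0 := by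
    have hsub : (μ' - μ) β₀ = μ' β₀ - μ β₀ := rfl
    rw [hsub, hμ'def, hμdef, happ, happ, hβ₀ a, hβ₀ b,
      mul_inv_cancel₀ (hTpos a).ne', mul_inv_cancel₀ (hTpos b).ne']
    ring
  have hqβ₀' : (μ - μ') β₀ = 0 := by
    have hsub : (μ - μ') β₀ = μ β₀ - μ' β₀ := rfl
    have hsub2 : (μ' - μ) β₀ = μ' β₀ - μ β₀ := rfl
    rw [hsub2] at hqβ₀
    rw [hsub]
    linarith
  have hself : ∀ x : X, x ∈ hotnessLevel P x := by
    intro x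
    constructor <;> · rw [sub_self]; exact zero_mem_hatP hP
  refine ⟨cyclic_mem_hatP hP T hT huniq β₀ hβ₀ _ hqβ₀, ?_, μ', μ, ?_, ?_, ?_, ?_, ?_, ?_, rfl⟩
  · have hneg : -(((0 : Meas X), μ' - μ) : VSp X) = ((0 : Meas X), μ - μ') := by
      rw [Prod.neg_mk, neg_zero, neg_sub]
    rw [hneg]
    exact cyclic_mem_hatP hP T hT huniq β₀ hβ₀ _ hqβ₀'
  · intro h hh
    rw [hμ'def, happ]
    exact mul_nonneg (hTpos a).le (hh a)
  · intro h hh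
    rw [hμdef, happ]
    exact mul_nonneg (hTpos b).le (hh b)
  · intro heq
    have h1 : μ' (1 : C(X, ℝ)) = 0 := by rw [heq]; rfl
    rw [hμ'def, happ] at h1
    simp only [ContinuousMap.one_apply, mul_one] at h1
    exact (hTpos a).ne' h1
  · intro heq
    have h1 : μ (1 : C(X, ℝ)) = 0 := by rw [heq]; rfl
    rw [hμdef, happ] at h1
    simp only [ContinuousMap.one_apply, mul_one] at h1
    exact (hTpos b).ne' h1
  · intro h hh
    rw [hμ'def, happ, hh a (hself a), mul_zero]
  · intro h hh
    rw [hμdef, happ, hh b (hself b), mul_zero]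

end CarnotAux

/-- **Corollary (Approximating reversible cyclic elements by combinations of Carnot
elements).** Let `(X, P)` be a Kelvin–Planck theory all of whose Clausius–Duhem
temperature scales are positive multiples of a fixed one.  Then the set of linear
combinations of Carnot elements of `(X, P)` is dense in the set of reversible
cyclic elements of `(X, P)`. -/
theorem carnot_combinations_dense_in_reversible_cyclic
    {X : Type*} [TopologicalSpace X] [CompactSpace X] [T2Space X]
    (P : Set (VSp X)) (hP : IsKelvinPlanck P)
    (T : C(X, ℝ)) (hT : IsCDTemp P T)
    (huniq : ∀ T' : C(X, ℝ), IsCDTemp P T' → ∃ α : ℝ, 0 < α ∧ T' = α • T) :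
    {p : VSp X | p ∈ hatP P ∧ -p ∈ hatP P ∧ p.1 = 0} ⊆
      closure (Submodule.span ℝ {p : VSp X | ∃ a b : X,
        IsCarnotBetween P (hotnessLevel P a) (hotnessLevel P b) p} : Set (VSp X)) := by
  classical
  intro p hp
  obtain ⟨hpK, hnK, hp1⟩ := hp
  set S : Set (VSp X) := {p : VSp X | ∃ a b : X,
    IsCarnotBetween P (hotnessLevel P a) (hotnessLevel P b) p} with hSdef
  by_cases hne : Nonempty X
  · obtain ⟨η, hTpos, hCD⟩ := id hT
    set β₀ : C(X, ℝ) := ⟨fun x => (T x)⁻¹, (map_continuous T).inv₀ fun x => (hTpos x).ne'⟩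
      with hβ₀def
    have hβ₀x : ∀ x, β₀ x = (T x)⁻¹ := fun x => rfl
    have hCDβ₀ : ∀ r ∈ P, r.2 β₀ ≤ r.1 η := hCD β₀ hβ₀x
    have h1 : p.2 β₀ ≤ 0 := by
      have h := cd_hatP hCDβ₀ p hpK
      rw [hp1] at h
      have e : ((0 : Meas X)) η = 0 := rfl
      rwa [e] at h
    have h2 : -(p.2 β₀) ≤ 0 := by
      have h := cd_hatP hCDβ₀ (-p) hnK
      have e1 : (-p).1 = -p.1 := rfl
      have e2 : (-p).2 β₀ = -(p.2 β₀) := rfl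
      rw [e1, hp1, neg_zero, e2] at h
      have e : ((0 : Meas X)) η = 0 := rfl
      rwa [e] at h
    have hq0 : p.2 β₀ = 0 := le_antisymm h1 (by linarith)
    by_contra hW
    obtain ⟨f, u, hfW, hu⟩ := geometric_hahn_banach_closed_point
      ((Submodule.span ℝ S).convex.closure) isClosed_closure hW
    have hu0 : 0 < u := by
      have h := hfW 0 (subset_closure (SetLike.mem_coe.2 (Submodule.zero_mem _)))
      rwa [map_zero] at h
    have hker : ∀ w ∈ Submodule.span ℝ S, f w = 0 := by
      intro w hw
      by_contra h0
      have h1 := hfW (((|u| + 1) / f w) • w)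
        (subset_closure (SetLike.mem_coe.2 (Submodule.smul_mem _ _ hw)))
      rw [map_smul, smul_eq_mul, div_mul_cancel₀ _ h0] at h1
      have := le_abs_self u
      linarith
    obtain ⟨g, β, hrep⟩ := rep_vsp f
    have hTβ : ∀ a b : X, T a * β a = T b * β b := by
      intro a b
      have hcar := carnot_dirac hP T hT huniq β₀ hβ₀x a b
      have hmem : (((0 : Meas X), T a • dirac a - T b • dirac b) : VSp X) ∈
          Submodule.span ℝ S := Submodule.subset_span ⟨a, b, hcar⟩
      have h3 := hker _ hmem
      rw [hrep] at h3
      have e0 : ((0 : Meas X)) g = 0 := rfl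
      have e1 : ((T a • dirac a - T b • dirac b : Meas X)) β = T a * β a - T b * β b := rfl
      rw [e0, e1] at h3
      linarith
    obtain ⟨a₀⟩ := hne
    have hβl : β = (T a₀ * β a₀) • β₀ := by
      ext x
      have h4 := hTβ x a₀
      have h5 : ((T a₀ * β a₀) • β₀) x = (T a₀ * β a₀) * (T x)⁻¹ := rfl
      have h6 : (T a₀ * β a₀) * (T x)⁻¹ = (T x * β x) * (T x)⁻¹ := by rw [h4]
      rw [h5, h6, mul_comm (T x) (β x), mul_assoc, mul_inv_cancel₀ (hTpos x).ne', mul_one]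
    have hfp : f p = 0 := by
      rw [hrep, hp1]
      have e0 : ((0 : Meas X)) g = 0 := rfl
      rw [e0, hβl, map_smul, smul_eq_mul, hq0]
      ring
    rw [hfp] at hu
    linarith
  · have hz : ∀ h : C(X, ℝ), h = 0 := fun h => by
      ext x; exact absurd ⟨x⟩ hne
    have h1 : p.1 = 0 := by
      refine DFunLike.ext _ _ fun h => ?_
      rw [hz h, map_zero]; rfl
    have h2 : p.2 = 0 := by
      refine DFunLike.ext _ _ fun h => ?_
      rw [hz h, map_zero]; rfl
    have hp0 : p = 0 := Prod.ext h1 h2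
    rw [hp0]
    exact subset_closure (SetLike.mem_coe.2 (Submodule.zero_mem _))
end
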